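/- Let 𝒳 = {x_{n,k}} with weights τ = {τ_{n,k}} be a Marcinkiewicz–Zygmund family on 𝕋 with constants A, B > 0. Let f be a continuous function on 𝕋 whose Fourier coefficients satisfy |f̂(k)| ≤ c e^{-ρ|k|} for all k ∈ ℤ, for some c > 0 and ρ > 0, and for each n let p_n ∈ 𝒯_n be a minimizer of p ↦ ∑_{k=1}^{L_n} |f(x_{n,k}) − p(x_{n,k})|² τ_{n,k}. Then there is a constant C > 0 such that ‖f − p_n‖₂ ≤ C e^{-ρn} for all n ≥ 1. -/

import Mathlib

open MeasureTheory AddCircle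

noncomputable section

/-- The torus `𝕋 = ℝ/ℤ`. -/
abbrev Torus := UnitAddCircle

/-- Normalized Haar (Lebesgue) probability measure on the torus. -/
abbrev haar : Measure Torus := AddCircle.haarAddCircle

/-- `‖p‖₂² = ∫_𝕋 |p(x)|² dx`. -/
def L2normSq (p : Torus → ℂ) : ℝ := ∫ x, ‖p x‖ ^ 2 ∂haar

/-- `p` is a trigonometric polynomial of degree `n`. -/
def IsTrigPoly (n : ℕ) (p : Torus → ℂ) : Prop :=
  ∃ c : ℤ → ℂ, p = fun x => ∑ l ∈ Finset.Icc (-(n : ℤ)) (n : ℤ), c l * fourier l x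

lemma IsTrigPoly.continuous {n : ℕ} {p : Torus → ℂ} (h : IsTrigPoly n p) : Continuous p := by
  obtain ⟨a, rfl⟩ := h
  exact continuous_finset_sum _ fun l _ => continuous_const.mul (fourier l).continuous

lemma IsTrigPoly.sub {n : ℕ} {p q : Torus → ℂ} (hp : IsTrigPoly n p) (hq : IsTrigPoly n q) :
    IsTrigPoly n (fun t => p t - q t) := by
  obtain ⟨a, rfl⟩ := hp
  obtain ⟨b, rfl⟩ := hq
  refine ⟨fun l => a l - b l, ?_⟩
  funext t
  rw [← Finset.sum_sub_distrib]
  exact Finset.sum_congr rfl fun l _ => by ring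

lemma isTrigPoly_one (n : ℕ) : IsTrigPoly n (fun _ => 1) := by
  refine ⟨fun l => if l = 0 then 1 else 0, ?_⟩
  funext t
  rw [Finset.sum_eq_single 0]
  · simp
  · intro l _ hl; simp [hl]
  · intro h
    exact absurd (Finset.mem_Icc.2 ⟨by simp, by simp⟩) h

lemma sq_norm_sub_le (u v w : ℂ) : ‖u - v‖ ^ 2 ≤ 2 * ‖u - w‖ ^ 2 + 2 * ‖w - v‖ ^ 2 := by
  have h : ‖u - v‖ ≤ ‖u - w‖ + ‖w - v‖ := by
    calc ‖u - v‖ = ‖(u - w) + (w - v)‖ := by rw [sub_add_sub_cancel]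
    _ ≤ ‖u - w‖ + ‖w - v‖ := norm_add_le _ _
  have h0 : ‖u - v‖ ^ 2 ≤ (‖u - w‖ + ‖w - v‖) ^ 2 :=
    pow_le_pow_left₀ (norm_nonneg _) h 2
  nlinarith [sq_nonneg (‖u - w‖ - ‖w - v‖)]

set_option maxHeartbeats 1000000 in
/-- for an MZ family and a continuous `f` with exponentially decaying
Fourier coefficients `|f̂(k)| ≤ c e^{-ρ|k|}`, the least squares quasi-interpolants
`p_n` satisfy `‖f − p_n‖₂ ≤ C e^{-ρn}` for all `n ≥ 1`, for some constant `C > 0`. -/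
theorem geometric_convergence_quasi_interpolants
    (L : ℕ → ℕ) (x : ∀ n, Fin (L n) → Torus) (τ : ∀ n, Fin (L n) → ℝ)
    (A B : ℝ) (hA : 0 < A) (hB : 0 < B) (hτ : ∀ n k, 0 < τ n k)
    (hMZ : ∀ n (p : Torus → ℂ), IsTrigPoly n p →
      A * L2normSq p ≤ ∑ k, ‖p (x n k)‖ ^ 2 * τ n k ∧
      ∑ k, ‖p (x n k)‖ ^ 2 * τ n k ≤ B * L2normSq p)
    (f : Torus → ℂ) (hf : Continuous f)
    (c ρ : ℝ) (hc : 0 < c) (hρ : 0 < ρ)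
    (hdecay : ∀ k : ℤ, ‖fourierCoeff f k‖ ≤ c * Real.exp (-ρ * |(k : ℝ)|))
    (p : ∀ n : ℕ, Torus → ℂ) (hp : ∀ n, IsTrigPoly n (p n))
    (hmin : ∀ n (q : Torus → ℂ), IsTrigPoly n q →
      ∑ k, ‖f (x n k) - p n (x n k)‖ ^ 2 * τ n k ≤
        ∑ k, ‖f (x n k) - q (x n k)‖ ^ 2 * τ n k) :
    ∃ C : ℝ, 0 < C ∧ ∀ n : ℕ, 1 ≤ n →
      Real.sqrt (L2normSq (fun t => f t - p n t)) ≤ C * Real.exp (-ρ * n) := by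
  -- basic constants
  set r : ℝ := Real.exp (-ρ) with hr_def
  have hr0 : 0 < r := Real.exp_pos _
  have hr1 : r < 1 := Real.exp_lt_one_iff.2 (by linarith)
  -- decay in geometric form
  have hdecay' : ∀ k : ℤ, ‖fourierCoeff f k‖ ≤ c * r ^ k.natAbs := by
    intro k
    have h1 := hdecay k
    have h2 : Real.exp (-ρ * |(k : ℝ)|) = r ^ k.natAbs := by
      rw [show |(k : ℝ)| = ((k.natAbs : ℕ) : ℝ) by simp [Nat.cast_natAbs],
        mul_comm, Real.exp_nat_mul]
    rwa [h2] at h1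
  -- summability facts
  have hgeo : Summable (fun m : ℕ => r ^ m) := summable_geometric_of_lt_one hr0.le hr1
  have hZ : Summable (fun k : ℤ => r ^ k.natAbs) := by
    apply Summable.of_nat_of_neg <;> simpa using hgeo
  have hcZ : Summable (fun k : ℤ => c * r ^ k.natAbs) := hZ.mul_left c
  have hsumCoeff : Summable (fourierCoeff f) :=
    Summable.of_norm_bounded hcZ hdecay'
  -- sum of the geometric series over ℤ
  set D : ℝ := ∑' m : ℤ, r ^ m.natAbs with hD_def
  have hD1 : 1 ≤ D := by
    have := Summable.le_tsum hZ 0 (fun j _ => pow_nonneg hr0.le _)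
    simpa using this
  have hD0 : 0 < D := lt_of_lt_of_le one_pos hD1
  -- pointwise Fourier expansion
  have hps : ∀ t : Torus, HasSum (fun k : ℤ => fourierCoeff f k • fourier k t) (f t) := by
    intro t
    exact has_pointwise_sum_fourier_series_of_summable
      (f := ContinuousMap.mk f hf) hsumCoeff t
  -- partial sums
  set S : ℕ → Torus → ℂ :=
    fun n t => ∑ l ∈ Finset.Icc (-(n : ℤ)) (n : ℤ), fourierCoeff f l * fourier l t with hS_def
  have hS_poly : ∀ n, IsTrigPoly n (S n) := fun n => ⟨fourierCoeff f, rfl⟩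
  have hS_cont : ∀ n, Continuous (S n) := fun n => (hS_poly n).continuous
  have hp_cont : ∀ n, Continuous (p n) := fun n => (hp n).continuous
  -- norms of terms
  have hnormterm : ∀ (k : ℤ) (t : Torus),
      ‖fourierCoeff f k • fourier k t‖ = ‖fourierCoeff f k‖ := by
    intro k t
    rw [norm_smul, show ‖fourier k t‖ = 1 by rw [fourier_apply]; exact Circle.norm_coe _, mul_one]
  have hsummand : ∀ t : Torus, Summable (fun k : ℤ => ‖fourierCoeff f k • fourier k t‖) := by
    intro t
    apply Summable.of_nonneg_of_le (fun k => norm_nonneg _) (fun k => ?_) hcZ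
    rw [hnormterm]; exact hdecay' k
  -- the tail bound
  have htail : ∀ (n : ℕ) (t : Torus), ‖f t - S n t‖ ≤ c * D * r ^ n := by
    intro n t
    set s : Finset ℤ := Finset.Icc (-(n : ℤ)) (n : ℤ) with hs_def
    set g : ℤ → ℂ := fun k => fourierCoeff f k • fourier k t with hg_def
    have hg : HasSum g (f t) := hps t
    have hgs : Summable g := hg.summable
    have hsplit : ∑ k ∈ s, g k + ∑' (k : ↑(↑s : Set ℤ)ᶜ), g k = f t := by
      rw [Summable.sum_add_tsum_compl (s := s) hgs, hg.tsum_eq]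
    have hSnt : S n t = ∑ k ∈ s, g k := by
      simp [hS_def, hg_def, smul_eq_mul, hs_def]
    have heq : f t - S n t = ∑' (k : ↑(↑s : Set ℤ)ᶜ), g k := by
      rw [hSnt, ← hsplit]; ring
    rw [heq]
    have hsub : Summable (fun k : ↑(↑s : Set ℤ)ᶜ => ‖g k‖) := (hsummand t).subtype _
    refine le_trans (norm_tsum_le_tsum_norm hsub) ?_
    -- compare with a shifted geometric sum over ℤ
    have hkey : ∑' (k : ↑(↑s : Set ℤ)ᶜ), ‖g k‖ ≤ ∑' (m : ℤ), (c * r ^ n) * r ^ m.natAbs := by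
      refine Summable.tsum_le_tsum_of_inj
        (fun k : ↑(↑s : Set ℤ)ᶜ => if 0 ≤ (k : ℤ) then (k : ℤ) - n else (k : ℤ) + n)
        ?_ (fun m _ => by positivity) (fun a => ?_) hsub (hZ.mul_left (c * r ^ n))
      · intro a b hab
        have ha : ¬(-(n : ℤ) ≤ (a : ℤ) ∧ (a : ℤ) ≤ n) := by
          simpa [hs_def, Set.mem_Icc] using a.2
        have hb : ¬(-(n : ℤ) ≤ (b : ℤ) ∧ (b : ℤ) ≤ n) := by
          simpa [hs_def, Set.mem_Icc] using b.2
        apply Subtype.ext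
        simp only at hab
        split_ifs at hab <;> omega
      · have ha : ¬(-(n : ℤ) ≤ (a : ℤ) ∧ (a : ℤ) ≤ n) := by
          simpa [hs_def, Set.mem_Icc] using a.2
        have hnat : (a : ℤ).natAbs =
            n + (if 0 ≤ (a : ℤ) then (a : ℤ) - n else (a : ℤ) + n).natAbs := by
          split_ifs <;> omega
        rw [hnormterm]
        calc ‖fourierCoeff f (a : ℤ)‖ ≤ c * r ^ (a : ℤ).natAbs := hdecay' _
        _ = (c * r ^ n) * r ^ (if 0 ≤ (a : ℤ) then (a : ℤ) - n else (a : ℤ) + n).natAbs := by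
            rw [hnat, pow_add]; ring
    refine hkey.trans ?_
    rw [tsum_mul_left, ← hD_def]
    ring_nf
    exact le_of_eq (by ring)
  -- integrability of squared norms of continuous functions
  have integ : ∀ q : Torus → ℂ, Continuous q →
      Integrable (fun t => ‖q t‖ ^ 2) haar := by
    intro q hq
    exact ((hq.norm.pow 2)).integrable_of_hasCompactSupport
      (HasCompactSupport.of_compactSpace _)
  -- total weight bound : ∑ τ ≤ B
  have hτB : ∀ n, ∑ k, τ n k ≤ B := by
    intro n
    have h1 := (hMZ n (fun _ => 1) (isTrigPoly_one n)).2
    have h2 : L2normSq (fun _ : Torus => (1 : ℂ)) = 1 := by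
      simp [L2normSq]
    rw [h2, mul_one] at h1
    simpa using h1
  -- main estimate
  set K : ℝ := 2 + 8 * B / A with hK_def
  have hK0 : 0 < K := by positivity
  refine ⟨Real.sqrt K * (c * D), by positivity, ?_⟩
  intro n _
  set ε : ℝ := c * D * r ^ n with hε_def
  have hε0 : 0 ≤ ε := by positivity
  -- L²(f - Sₙ) ≤ ε²
  have hL2fS : L2normSq (fun t => f t - S n t) ≤ ε ^ 2 := by
    have hmono : ∀ t : Torus, ‖f t - S n t‖ ^ 2 ≤ ε ^ 2 := fun t =>
      pow_le_pow_left₀ (norm_nonneg _) (htail n t) 2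
    calc L2normSq (fun t => f t - S n t)
        ≤ ∫ _ : Torus, ε ^ 2 ∂haar :=
          integral_mono (integ _ (hf.sub (hS_cont n))) (integrable_const _) hmono
      _ = ε ^ 2 := by simp
  -- sample sums of f - Sₙ
  have hsum_fS : ∑ k, ‖f (x n k) - S n (x n k)‖ ^ 2 * τ n k ≤ B * ε ^ 2 := by
    calc ∑ k, ‖f (x n k) - S n (x n k)‖ ^ 2 * τ n k
        ≤ ∑ k, ε ^ 2 * τ n k := by
          refine Finset.sum_le_sum fun k _ => ?_
          exact mul_le_mul_of_nonneg_right
            (pow_le_pow_left₀ (norm_nonneg _) (htail n _) 2) (hτ n k).le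
      _ = ε ^ 2 * ∑ k, τ n k := by rw [Finset.mul_sum]
      _ ≤ ε ^ 2 * B := mul_le_mul_of_nonneg_left (hτB n) (sq_nonneg _)
      _ = B * ε ^ 2 := mul_comm _ _
  -- sample sums of f - pₙ (by minimality)
  have hsum_fp : ∑ k, ‖f (x n k) - p n (x n k)‖ ^ 2 * τ n k ≤ B * ε ^ 2 :=
    (hmin n (S n) (hS_poly n)).trans hsum_fS
  -- MZ bound for Sₙ - pₙ
  have hq_poly : IsTrigPoly n (fun t => S n t - p n t) := (hS_poly n).sub (hp n)
  have hMZlow := (hMZ n _ hq_poly).1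
  have hsum_q : ∑ k, ‖S n (x n k) - p n (x n k)‖ ^ 2 * τ n k ≤ 4 * (B * ε ^ 2) := by
    calc ∑ k, ‖S n (x n k) - p n (x n k)‖ ^ 2 * τ n k
        ≤ ∑ k, (2 * ‖f (x n k) - S n (x n k)‖ ^ 2
            + 2 * ‖f (x n k) - p n (x n k)‖ ^ 2) * τ n k := by
          refine Finset.sum_le_sum fun k _ => ?_
          refine mul_le_mul_of_nonneg_right ?_ (hτ n k).le
          have h := sq_norm_sub_le (S n (x n k)) (p n (x n k)) (f (x n k))
          have h2 : ‖S n (x n k) - f (x n k)‖ = ‖f (x n k) - S n (x n k)‖ := norm_sub_rev _ _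
          rw [h2] at h
          exact h
      _ = 2 * (∑ k, ‖f (x n k) - S n (x n k)‖ ^ 2 * τ n k)
            + 2 * (∑ k, ‖f (x n k) - p n (x n k)‖ ^ 2 * τ n k) := by
          rw [Finset.mul_sum, Finset.mul_sum, ← Finset.sum_add_distrib]
          exact Finset.sum_congr rfl fun k _ => by ring
      _ ≤ 2 * (B * ε ^ 2) + 2 * (B * ε ^ 2) :=
          add_le_add (by linarith) (by linarith)
      _ = 4 * (B * ε ^ 2) := by ring
  have hL2q : L2normSq (fun t => S n t - p n t) ≤ 4 * B * ε ^ 2 / A := by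
    rw [le_div_iff₀ hA, mul_comm]
    calc A * L2normSq (fun t => S n t - p n t)
        ≤ ∑ k, ‖S n (x n k) - p n (x n k)‖ ^ 2 * τ n k := hMZlow
      _ ≤ 4 * (B * ε ^ 2) := hsum_q
      _ = 4 * B * ε ^ 2 := by ring
  -- combine
  have hL2fp : L2normSq (fun t => f t - p n t) ≤ K * ε ^ 2 := by
    have hint0 := integ _ (hf.sub (hp_cont n))
    have hint1 := integ _ (hf.sub (hS_cont n))
    have hint2 := integ _ ((hS_cont n).sub (hp_cont n))
    have hmono : ∀ t : Torus, ‖f t - p n t‖ ^ 2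
        ≤ 2 * ‖f t - S n t‖ ^ 2 + 2 * ‖S n t - p n t‖ ^ 2 :=
      fun t => sq_norm_sub_le (f t) (p n t) (S n t)
    have hint3 : Integrable (fun t => 2 * ‖f t - S n t‖ ^ 2 + 2 * ‖S n t - p n t‖ ^ 2) haar :=
      (hint1.const_mul 2).add (hint2.const_mul 2)
    calc L2normSq (fun t => f t - p n t)
        ≤ ∫ t, (2 * ‖f t - S n t‖ ^ 2 + 2 * ‖S n t - p n t‖ ^ 2) ∂haar :=
          integral_mono hint0 hint3 hmono
      _ = 2 * L2normSq (fun t => f t - S n t) + 2 * L2normSq (fun t => S n t - p n t) := by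
          rw [integral_add (f := fun t => 2 * ‖f t - S n t‖ ^ 2) (g := fun t => 2 * ‖S n t - p n t‖ ^ 2) (hint1.const_mul 2) (hint2.const_mul 2),
            integral_const_mul, integral_const_mul]
          simp only [L2normSq]
      _ ≤ 2 * ε ^ 2 + 2 * (4 * B * ε ^ 2 / A) :=
          add_le_add (by linarith [hL2fS]) (by linarith [hL2q])
      _ = K * ε ^ 2 := by rw [hK_def]; field_simp; ring
  -- take square roots
  have hfinal : Real.sqrt (L2normSq (fun t => f t - p n t)) ≤ Real.sqrt K * ε := by
    calc Real.sqrt (L2normSq (fun t => f t - p n t))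
        ≤ Real.sqrt (K * ε ^ 2) := Real.sqrt_le_sqrt hL2fp
      _ = Real.sqrt K * ε := by
          rw [Real.sqrt_mul hK0.le, Real.sqrt_sq hε0]
  refine hfinal.trans (le_of_eq ?_)
  rw [hε_def, show Real.exp (-ρ * (n : ℝ)) = r ^ n by rw [mul_comm, Real.exp_nat_mul], ]
  ring

end
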